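/- For all real numbers 0 ≤ q ≤ p < 1, kl(q,p) ≥ (p−q)² / (2p) (refined Pinsker inequality for Bernoulli distributions). -/

import Mathlib

open MeasureTheory ENNReal

lemma log_le_half_sub_inv {x : ℝ} (hx : 1 ≤ x) : Real.log x ≤ (x - x⁻¹) / 2 := by
  rcases eq_or_lt_of_le hx with h | h
  · simp [← h]
  · rw [← Real.sinh_log (by linarith)]
    exact le_of_lt (Real.self_lt_sinh_iff.mpr (Real.log_pos h))

/-- Binary Kullback–Leibler divergence `kl(q,p)` for `q, p ∈ [0,1]`, with the conventions
`0 · ln 0 = 0` and `kl(q,p) = ∞` when `p ∈ {0,1}` and `q ≠ p`. -/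
noncomputable def klBin (q p : ℝ) : ℝ≥0∞ :=
  if (p = 0 ∨ p = 1) ∧ q ≠ p then ∞
  else ENNReal.ofReal (q * Real.log (q / p) + (1 - q) * Real.log ((1 - q) / (1 - p)))

/-- **Refined Pinsker inequality** for Bernoulli distributions:
for `0 ≤ q ≤ p < 1`, `kl(q,p) ≥ (p−q)²/(2p)`. -/
theorem refined_pinsker (q p : ℝ) (hq : 0 ≤ q) (hqp : q ≤ p) (hp : p < 1) :
    ENNReal.ofReal ((p - q) ^ 2 / (2 * p)) ≤ klBin q p := by
  rcases eq_or_lt_of_le (hq.trans hqp) with hp0 | hp0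
  · -- p = 0, hence q = 0
    have hq0 : q = 0 := le_antisymm (hp0 ▸ hqp) hq
    simp [klBin, ← hp0, hq0]
  · -- p > 0
    have hq1 : q < 1 := lt_of_le_of_lt hqp hp
    have h1q : (0:ℝ) < 1 - q := by linarith
    have h1p : (0:ℝ) < 1 - p := by linarith
    have h1 : (q^2 - p^2)/(2*p) ≤ q * Real.log (q / p) := by
      rcases eq_or_lt_of_le hq with hq0 | hq0
      · rw [← hq0]
        have h : (0:ℝ) ≤ p^2/(2*p) := by positivity
        have he : ((0:ℝ)^2 - p^2)/(2*p) = -(p^2/(2*p)) := by ring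
        rw [he]
        simp only [zero_mul]
        linarith
      · have hx : 1 ≤ p / q := (one_le_div hq0).mpr hqp
        have := log_le_half_sub_inv hx
        have hlog : Real.log (q / p) = - Real.log (p / q) := by
          rw [← Real.log_inv]; congr 1; field_simp
        rw [hlog]
        rw [inv_div] at this
        have h2 : q * (-(Real.log (p/q))) ≥ q * (-((p/q - q/p)/2)) := by
          apply mul_le_mul_of_nonneg_left (by linarith) hq
        calc (q^2 - p^2)/(2*p) = q * (-((p/q - q/p)/2)) := by
              field_simp; ring
          _ ≤ q * (-(Real.log (p/q))) := h2
          _ = q * Real.log (p/q)⁻¹ := by rw [Real.log_inv]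
          _ = q * (-Real.log (p/q)) := by rw [Real.log_inv]
    have h2 : p - q ≤ (1 - q) * Real.log ((1 - q) / (1 - p)) := by
      have hy : (0:ℝ) < (1 - p) / (1 - q) := by positivity
      have := Real.log_le_sub_one_of_pos hy
      have hlog : Real.log ((1 - q) / (1 - p)) = - Real.log ((1 - p) / (1 - q)) := by
        rw [← Real.log_inv]; congr 1; field_simp
      rw [hlog]
      have : -Real.log ((1 - p) / (1 - q)) ≥ -((1 - p)/(1 - q) - 1) := by linarith
      calc (1 - q) * (-Real.log ((1 - p) / (1 - q)))
          ≥ (1 - q) * (-((1 - p)/(1 - q) - 1)) :=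
            mul_le_mul_of_nonneg_left this h1q.le
        _ = p - q := by field_simp; ring
    have key : (p - q)^2 / (2*p) ≤
        q * Real.log (q / p) + (1 - q) * Real.log ((1 - q) / (1 - p)) := by
      have : (p - q)^2 / (2*p) = (q^2 - p^2)/(2*p) + (p - q) := by
        field_simp; ring
      linarith
    have hcond : ¬ ((p = 0 ∨ p = 1) ∧ q ≠ p) := by
      rintro ⟨h | h, -⟩ <;> linarith
    rw [klBin, if_neg hcond]
    exact ENNReal.ofReal_le_ofReal key
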